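/- Over an algebraically closed field of characteristic different from 2, there is no dual 3-net in PG(2,K) labeled by the elementary abelian group (Z/2Z)³. That is, there do not exist injective maps α₁, α₂, α₃ : (Z/2Z)³ → PG(2,K) with pairwise disjoint images such that α₁(x), α₂(y), α₃(z) are collinear if and only if x + y = z. -/

import Mathlib

open Matrix


set_option linter.unreachableTactic false
set_option linter.unusedTactic false
set_option maxHeartbeats 1000000

noncomputable section
namespace DualNet
variable {K : Type*} [Field K]

abbrev V3 (K : Type*) [Field K] := Fin 3 → K

lemma ext3 {x y : V3 K} (h0 : x 0 = y 0) (h1 : x 1 = y 1) (h2 : x 2 = y 2) : x = y :=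
  funext fun i => by fin_cases i <;> assumption

def dt (u v w : V3 K) : K := Matrix.det (Matrix.of ![u, v, w])

lemma dt_expand (u v w : V3 K) :
    dt u v w = u 0 * v 1 * w 2 - u 0 * v 2 * w 1 - u 1 * v 0 * w 2
      + u 1 * v 2 * w 0 + u 2 * v 0 * w 1 - u 2 * v 1 * w 0 := by
  simp [dt, Matrix.det_fin_three, Matrix.of_apply]

/-- `w` is in the span of `u` and `v`. -/
def InSpan2 (u v w : V3 K) : Prop := ∃ a b : K, w = a • u + b • v

/-- `u` is not a scalar multiple of `v`. -/
def Nonprop (u v : V3 K) : Prop := ∀ c : K, u ≠ c • v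

lemma Nonprop.flip {u v : V3 K} (h : Nonprop u v) (hv : v ≠ 0) : Nonprop v u := by
  intro c hc
  rcases eq_or_ne c 0 with rfl | hc0
  · exact hv (by simpa using hc)
  · exact h c⁻¹ (by rw [hc, smul_smul, inv_mul_cancel₀ hc0, one_smul])

lemma Nonprop.ne_zero' {u v : V3 K} (h : Nonprop u v) : u ≠ 0 := by
  intro h0; exact h 0 (by simp [h0])

lemma span_of_dt {u v w : V3 K} (hd : dt u v w = 0) (huv : Nonprop u v) (hv : v ≠ 0) :
    InSpan2 u v w := by
  rw [dt_expand] at hd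
  by_cases h01 : u 0 * v 1 - u 1 * v 0 ≠ 0
  · refine ⟨(w 0 * v 1 - w 1 * v 0)/(u 0 * v 1 - u 1 * v 0),
      (u 0 * w 1 - u 1 * w 0)/(u 0 * v 1 - u 1 * v 0), ?_⟩
    apply ext3 <;>
      (simp only [Pi.add_apply, Pi.smul_apply, smul_eq_mul]
       rw [div_mul_eq_mul_div, div_mul_eq_mul_div, ← add_div, eq_div_iff (by assumption)]) <;>
      first
        | ring1 | linear_combination hd | linear_combination -hd
        | linear_combination 2*hd | linear_combination -2*hd
  by_cases h02 : u 0 * v 2 - u 2 * v 0 ≠ 0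
  · refine ⟨(w 0 * v 2 - w 2 * v 0)/(u 0 * v 2 - u 2 * v 0),
      (u 0 * w 2 - u 2 * w 0)/(u 0 * v 2 - u 2 * v 0), ?_⟩
    apply ext3 <;>
      (simp only [Pi.add_apply, Pi.smul_apply, smul_eq_mul]
       rw [div_mul_eq_mul_div, div_mul_eq_mul_div, ← add_div, eq_div_iff (by assumption)]) <;>
      first
        | ring1 | linear_combination hd | linear_combination -hd
        | linear_combination 2*hd | linear_combination -2*hd
  by_cases h12 : u 1 * v 2 - u 2 * v 1 ≠ 0
  · refine ⟨(w 1 * v 2 - w 2 * v 1)/(u 1 * v 2 - u 2 * v 1),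
      (u 1 * w 2 - u 2 * w 1)/(u 1 * v 2 - u 2 * v 1), ?_⟩
    apply ext3 <;>
      (simp only [Pi.add_apply, Pi.smul_apply, smul_eq_mul]
       rw [div_mul_eq_mul_div, div_mul_eq_mul_div, ← add_div, eq_div_iff (by assumption)]) <;>
      first
        | ring1 | linear_combination hd | linear_combination -hd
        | linear_combination 2*hd | linear_combination -2*hd
  · exfalso
    push_neg at h01 h02 h12
    rw [sub_eq_zero] at h01 h02 h12
    have hvk : v 0 ≠ 0 ∨ v 1 ≠ 0 ∨ v 2 ≠ 0 := by
      by_contra h; push_neg at h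
      exact hv (ext3 h.1 h.2.1 h.2.2)
    rcases hvk with hk | hk | hk
    · refine huv (u 0 / v 0) (ext3 ?_ ?_ ?_) <;>
        (simp only [Pi.smul_apply, smul_eq_mul];
         rw [div_mul_eq_mul_div, eq_div_iff hk]) <;>
        first
          | ring1 | linear_combination h01 | linear_combination -h01
          | linear_combination h02 | linear_combination -h02
          | linear_combination h12 | linear_combination -h12
    · refine huv (u 1 / v 1) (ext3 ?_ ?_ ?_) <;>
        (simp only [Pi.smul_apply, smul_eq_mul];
         rw [div_mul_eq_mul_div, eq_div_iff hk]) <;>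
        first
          | ring1 | linear_combination h01 | linear_combination -h01
          | linear_combination h02 | linear_combination -h02
          | linear_combination h12 | linear_combination -h12
    · refine huv (u 2 / v 2) (ext3 ?_ ?_ ?_) <;>
        (simp only [Pi.smul_apply, smul_eq_mul];
         rw [div_mul_eq_mul_div, eq_div_iff hk]) <;>
        first
          | ring1 | linear_combination h01 | linear_combination -h01
          | linear_combination h02 | linear_combination -h02
          | linear_combination h12 | linear_combination -h12

section Helpers
variable {K : Type*} [Field K]

lemma dt_swap12 (u v w : V3 K) : dt v u w = -dt u v w := by
  simp only [dt_expand]; ring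

lemma dt_cyc (u v w : V3 K) : dt v w u = dt u v w := by
  simp only [dt_expand]; ring

lemma dt_smul3 (u v w : V3 K) (c : K) : dt u v (c • w) = c * dt u v w := by
  simp only [dt_expand, Pi.smul_apply, smul_eq_mul]; ring

lemma dt_smul2 (u v w : V3 K) (c : K) : dt u (c • v) w = c * dt u v w := by
  simp only [dt_expand, Pi.smul_apply, smul_eq_mul]; ring

lemma dt_smul1 (u v w : V3 K) (c : K) : dt (c • u) v w = c * dt u v w := by
  simp only [dt_expand, Pi.smul_apply, smul_eq_mul]; ring

/-- Any three vectors in a 2-dimensional span have zero determinant. -/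
lemma dt_span_pair (s t : V3 K) (a1 b1 a2 b2 a3 b3 : K) :
    dt (a1 • s + b1 • t) (a2 • s + b2 • t) (a3 • s + b3 • t) = 0 := by
  simp only [dt_expand, Pi.add_apply, Pi.smul_apply, smul_eq_mul]; ring

lemma dt_combo1 (e1 e2 e3 : V3 K) (a b c : K) :
    dt (a • e1 + b • e2 + c • e3) e2 e3 = a * dt e1 e2 e3 := by
  simp only [dt_expand, Pi.add_apply, Pi.smul_apply, smul_eq_mul]; ring

lemma dt_combo2 (e1 e2 e3 : V3 K) (a b c : K) :
    dt e1 (a • e1 + b • e2 + c • e3) e3 = b * dt e1 e2 e3 := by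
  simp only [dt_expand, Pi.add_apply, Pi.smul_apply, smul_eq_mul]; ring

lemma dt_combo3 (e1 e2 e3 : V3 K) (a b c : K) :
    dt e1 e2 (a • e1 + b • e2 + c • e3) = c * dt e1 e2 e3 := by
  simp only [dt_expand, Pi.add_apply, Pi.smul_apply, smul_eq_mul]; ring

/-- Cramer: a nondegenerate triple spans everything. -/
lemma cramer3 {e1 e2 e3 : V3 K} (hD : dt e1 e2 e3 ≠ 0) (v : V3 K) :
    ∃ a b c : K, v = a • e1 + b • e2 + c • e3 := by
  refine ⟨dt v e2 e3 / dt e1 e2 e3, dt e1 v e3 / dt e1 e2 e3, dt e1 e2 v / dt e1 e2 e3, ?_⟩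
  apply ext3 <;>
    (simp only [Pi.add_apply, Pi.smul_apply, smul_eq_mul]; field_simp;
     simp only [dt_expand]; ring)

lemma coeff_unique {e1 e2 e3 : V3 K} (hD : dt e1 e2 e3 ≠ 0) {a b c a' b' c' : K}
    (h : a • e1 + b • e2 + c • e3 = a' • e1 + b' • e2 + c' • e3) :
    a = a' ∧ b = b' ∧ c = c' := by
  refine ⟨?_, ?_, ?_⟩
  · have h1 := congrArg (fun x => dt x e2 e3) h
    simp only [dt_combo1] at h1
    exact mul_right_cancel₀ hD h1
  · have h1 := congrArg (fun x => dt e1 x e3) h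
    simp only [dt_combo2] at h1
    exact mul_right_cancel₀ hD h1
  · have h1 := congrArg (fun x => dt e1 e2 x) h
    simp only [dt_combo3] at h1
    exact mul_right_cancel₀ hD h1

/-- If `s, t` lie in the span of `u, v`, are "independent", then `u, v` lie in span of `s, t`. -/
lemma span2_invert {u v s t : V3 K} (hs : InSpan2 u v s) (ht : InSpan2 u v t)
    (ht0 : t ≠ 0) (hnp : Nonprop s t) : InSpan2 s t u ∧ InSpan2 s t v := by
  obtain ⟨a, b, hsab⟩ := hs
  obtain ⟨c, d, htcd⟩ := ht
  by_cases hD : a * d - b * c = 0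
  · exfalso
    have h1 : d • s - b • t = (a * d - b * c) • u := by
      rw [hsab, htcd]; apply ext3 <;>
        (simp only [Pi.add_apply, Pi.sub_apply, Pi.smul_apply, smul_eq_mul]; ring)
    have h2 : a • t - c • s = (a * d - b * c) • v := by
      rw [hsab, htcd]; apply ext3 <;>
        (simp only [Pi.add_apply, Pi.sub_apply, Pi.smul_apply, smul_eq_mul]; ring)
    rw [hD, zero_smul, sub_eq_zero] at h1 h2
    by_cases hd0 : d = 0
    · have hb0 : b = 0 := by
        by_contra hb
        exact ht0 (by
          have := h1; rw [hd0, zero_smul] at this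
          have : t = 0 := by
            have h3 : b • t = 0 := this.symm
            simpa [hb] using congrArg (fun x => b⁻¹ • x) h3
          exact this)
      by_cases ha0 : a = 0
      · exact hnp 0 (by simp [hsab, ha0, hb0])
      · by_cases hc0 : c = 0
        · exact ht0 (by simp [htcd, hc0, hd0])
        · refine hnp (a / c) ?_
          calc s = c⁻¹ • (c • s) := by
                    rw [smul_smul, inv_mul_cancel₀ hc0, one_smul]
            _ = c⁻¹ • (a • t) := by rw [h2]
            _ = (a / c) • t := by rw [smul_smul, div_eq_inv_mul, mul_comm]
    · refine hnp (b / d) ?_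
      calc s = d⁻¹ • (d • s) := by
                rw [smul_smul, inv_mul_cancel₀ hd0, one_smul]
        _ = d⁻¹ • (b • t) := by rw [h1]
        _ = (b / d) • t := by rw [smul_smul, div_eq_inv_mul, mul_comm]
  · constructor
    · refine ⟨d / (a*d - b*c), -b / (a*d - b*c), ?_⟩
      rw [hsab, htcd]; apply ext3 <;>
        (simp only [Pi.add_apply, Pi.smul_apply, smul_eq_mul]
         rw [div_mul_eq_mul_div, div_mul_eq_mul_div, ← add_div, eq_div_iff hD]; ring)
    · refine ⟨-c / (a*d - b*c), a / (a*d - b*c), ?_⟩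
      rw [hsab, htcd]; apply ext3 <;>
        (simp only [Pi.add_apply, Pi.smul_apply, smul_eq_mul]
         rw [div_mul_eq_mul_div, div_mul_eq_mul_div, ← add_div, eq_div_iff hD]; ring)

lemma span2_trans {s t u v w : V3 K} (h : InSpan2 u v w) (hu : InSpan2 s t u)
    (hv : InSpan2 s t v) : InSpan2 s t w := by
  obtain ⟨a, b, hw⟩ := h
  obtain ⟨p, q, hu'⟩ := hu
  obtain ⟨r, o, hv'⟩ := hv
  refine ⟨a*p + b*r, a*q + b*o, ?_⟩
  rw [hw, hu', hv']; apply ext3 <;>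
    (simp only [Pi.add_apply, Pi.smul_apply, smul_eq_mul]; ring)

/-- Two elements of the intersection of two 2-dim spans: either proportional or spans coincide. -/
lemma prop_or_span {u v u' v' s t : V3 K}
    (hs1 : InSpan2 u v s) (hs2 : InSpan2 u' v' s)
    (ht1 : InSpan2 u v t) (ht2 : InSpan2 u' v' t)
    (hs0 : s ≠ 0) (ht0 : t ≠ 0) :
    (∃ c : K, c ≠ 0 ∧ t = c • s) ∨ (InSpan2 u v u' ∧ InSpan2 u v v') := by
  by_cases hP : ∃ c : K, t = c • s
  · obtain ⟨c, hc⟩ := hP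
    left
    refine ⟨c, ?_, hc⟩
    intro h0; exact ht0 (by simp [hc, h0])
  · right
    push_neg at hP
    have hnp : Nonprop s t := by
      intro c hc
      rcases eq_or_ne c 0 with rfl | hc0
      · exact hs0 (by simpa using hc)
      · exact hP c⁻¹ (by rw [hc, smul_smul, inv_mul_cancel₀ hc0, one_smul])
    obtain ⟨hu', hv'⟩ := span2_invert hs2 ht2 ht0 hnp
    exact ⟨span2_trans hu' hs1 ht1, span2_trans hv' hs1 ht1⟩

end Helpers

section NetDef

abbrev GG := ZMod 2 × ZMod 2 × ZMod 2

variable {K : Type*} [Field K]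

lemma dt_swap23 (u v w : V3 K) : dt u w v = -dt u v w := by
  simp only [dt_expand]; ring

lemma dt_rep13 (u v : V3 K) : dt u v u = 0 := by simp only [dt_expand]; ring
lemma dt_rep12 (u v : V3 K) : dt u u v = 0 := by simp only [dt_expand]; ring
lemma dt_rep23 (u v : V3 K) : dt u v v = 0 := by simp only [dt_expand]; ring

lemma dt_span_pattern1 (s t : V3 K) (a b : K) : dt t (a • s + b • t) s = 0 := by
  simp only [dt_expand, Pi.add_apply, Pi.smul_apply, smul_eq_mul]; ring

lemma dt_span_pattern2 (s t : V3 K) (a b : K) : dt s (a • s + b • t) t = 0 := by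
  simp only [dt_expand, Pi.add_apply, Pi.smul_apply, smul_eq_mul]; ring

lemma eq_smul_of_combo_zero {u v : V3 K} {a b : K} (h : a • u + b • v = 0) (ha : a ≠ 0) :
    u = (-b/a) • v := by
  have h1 : a • u = (-b) • v := by
    rw [neg_smul]
    exact add_eq_zero_iff_eq_neg.mp h
  calc u = a⁻¹ • (a • u) := by rw [smul_smul, inv_mul_cancel₀ ha, one_smul]
    _ = a⁻¹ • ((-b) • v) := by rw [h1]
    _ = (-b/a) • v := by rw [smul_smul, div_eq_inv_mul, mul_comm a⁻¹ (-b), mul_comm (-b) a⁻¹]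

/-- A dual 3-net labeled by `(ℤ/2)³`, in terms of representative vectors. -/
def Net (A B C : GG → V3 K) : Prop :=
  (∀ x, A x ≠ 0) ∧ (∀ x, B x ≠ 0) ∧ (∀ x, C x ≠ 0) ∧
    ∀ x y z, (dt (A x) (B y) (C z) = 0 ↔ x + y = z)

namespace Net

variable {A B C : GG → V3 K}

lemma nzA (h : Net A B C) : ∀ x, A x ≠ 0 := h.1
lemma nzB (h : Net A B C) : ∀ x, B x ≠ 0 := h.2.1
lemma nzC (h : Net A B C) : ∀ x, C x ≠ 0 := h.2.2.1
lemma iff' (h : Net A B C) : ∀ x y z, (dt (A x) (B y) (C z) = 0 ↔ x + y = z) := h.2.2.2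

lemma swap (h : Net A B C) : Net B A C := by
  refine ⟨h.nzB, h.nzA, h.nzC, fun y x z => ?_⟩
  rw [dt_swap12, neg_eq_zero, h.iff', add_comm]

lemma cyc (h : Net A B C) : Net B C A := by
  refine ⟨h.nzB, h.nzC, h.nzA, fun y z x => ?_⟩
  rw [dt_cyc, h.iff']
  have e1 : ∀ u v : GG, v + (u + v) = u := by decide
  have e2 : ∀ u v : GG, (u + v) + u = v := by decide
  constructor
  · rintro rfl; exact e1 x y
  · rintro rfl; exact e2 y z

lemma npAB (h : Net A B C) (x y : GG) : Nonprop (A x) (B y) := by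
  intro c hc
  have hz : ∀ z, dt (A x) (B y) (C z) = 0 := by
    intro z; rw [hc, dt_smul1, dt_rep12, mul_zero]
  have h1 : x + y = x + y + (1, 0, 0) := (h.iff' x y _).mp (hz _)
  have h2 : x + y + 0 = x + y + (1, 0, 0) := by rw [add_zero]; exact h1
  exact absurd (add_left_cancel h2) (by decide)

lemma npAC (h : Net A B C) (x z : GG) : Nonprop (A x) (C z) := by
  intro c hc
  have hz : ∀ y, dt (A x) (B y) (C z) = 0 := by
    intro y; rw [hc, dt_smul1]
    have : dt (C z) (B y) (C z) = 0 := dt_rep13 _ _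
    rw [this, mul_zero]
  have e0 : x + 0 = z := (h.iff' x 0 z).mp (hz 0)
  have e1 : x + (1,0,0) = z := (h.iff' x (1,0,0) z).mp (hz _)
  have h2 : x + (1,0,0) = x + 0 := e1.trans e0.symm
  exact absurd (add_left_cancel h2) (by decide)

lemma npBC (h : Net A B C) (y z : GG) : Nonprop (B y) (C z) :=
  (h.swap).npAC y z

lemma npAA (h : Net A B C) {x x' : GG} (hne : x ≠ x') : Nonprop (A x) (A x') := by
  intro c hc
  have h0 : dt (A x) (B 0) (C x') = 0 := by
    rw [hc, dt_smul1, (h.iff' x' 0 x').mpr (add_zero x'), mul_zero]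
  have := (h.iff' x 0 x').mp h0
  rw [add_zero] at this
  exact hne this

lemma npBB (h : Net A B C) {y y' : GG} (hne : y ≠ y') : Nonprop (B y) (B y') :=
  (h.swap).npAA hne

lemma npCC (h : Net A B C) {z z' : GG} (hne : z ≠ z') : Nonprop (C z) (C z') :=
  (h.cyc.cyc).npAA hne

/-- No line contains two points of the first component and one of the second. -/
lemma F3 (h : Net A B C) {x x' : GG} (y : GG) (hne : x ≠ x') :
    dt (A x) (A x') (B y) ≠ 0 := by
  intro hdz
  have hBy : InSpan2 (A x) (A x') (B y) :=
    span_of_dt hdz (h.npAA hne) (h.nzA x')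
  obtain ⟨a, b, hB⟩ := hBy
  have hCxy : InSpan2 (A x) (B y) (C (x + y)) :=
    span_of_dt ((h.iff' x y (x+y)).mpr rfl) (h.npAB x y) (h.nzB y)
  obtain ⟨p, q, hC⟩ := hCxy
  have hCcombo : C (x + y) = (p + q*a) • A x + (q*b) • A x' := by
    rw [hC, hB]; apply ext3 <;>
      (simp only [Pi.add_apply, Pi.smul_apply, smul_eq_mul]; ring)
  have hd0 : dt (A x') (B y) (C (x + y)) = 0 := by
    have hxx : A x' = (0:K) • A x + (1:K) • A x' := by
      apply ext3 <;> (simp only [Pi.add_apply, Pi.smul_apply, smul_eq_mul]; ring)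
    rw [hB, hCcombo]
    nth_rewrite 1 [hxx]
    exact dt_span_pair (A x) (A x') 0 1 a b (p+q*a) (q*b)
  have := (h.iff' x' y (x+y)).mp hd0
  exact hne (add_right_cancel this).symm

/-- The key Desargues-style lemma: for any `x y` and involution `a`, there is a point `T`
on both "a-lines" `A x ∨ A (x+a)` and `B y ∨ B (y+a)` which moreover lies on every line
`C (x+y+g) ∨ C (x+y+g+a)` for `g ∉ {0, a}`. -/
lemma desargues (h : Net A B C) (x y a : GG) (ha : a ≠ 0) :
    ∃ T : V3 K, T ≠ 0 ∧ InSpan2 (A x) (A (x+a)) T ∧ InSpan2 (B y) (B (y+a)) T ∧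
      ∀ g : GG, g ≠ 0 → g ≠ a → InSpan2 (C (x+y+g)) (C (x+y+g+a)) T := by
  have hshift : ∀ u v w : GG, (u+w)+(v+w) = u+v := by decide
  have hxne : x ≠ x + a := fun hh => ha (left_eq_add.mp hh)
  have hO := h.nzC (x+y)
  -- B y = β2 • A x + γ2 • O
  have m2 : InSpan2 (A x) (C (x+y)) (B y) := by
    apply span_of_dt _ (h.npAC x (x+y)) hO
    rw [dt_swap23, neg_eq_zero]
    exact (h.iff' x y _).mpr rfl
  obtain ⟨β2, γ2, hB2⟩ := m2
  have hβ2 : β2 ≠ 0 := by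
    intro h0; exact h.npBC y (x+y) γ2 (by rw [hB2, h0, zero_smul, zero_add])
  have hγ2 : γ2 ≠ 0 := by
    intro h0
    exact (h.npAB x y).flip (h.nzB y) β2 (by rw [hB2, h0, zero_smul, add_zero])
  -- B (y+a) = β3 • A (x+a) + γ3 • O
  have m3 : InSpan2 (A (x+a)) (C (x+y)) (B (y+a)) := by
    apply span_of_dt _ (h.npAC _ _) hO
    rw [dt_swap23, neg_eq_zero]
    exact (h.iff' (x+a) (y+a) _).mpr (hshift x y a)
  obtain ⟨β3, γ3, hB3⟩ := m3
  have hβ3 : β3 ≠ 0 := by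
    intro h0; exact h.npBC (y+a) (x+y) γ3 (by rw [hB3, h0, zero_smul, zero_add])
  have hγ3 : γ3 ≠ 0 := by
    intro h0
    exact (h.npAB (x+a) (y+a)).flip (h.nzB _) β3 (by rw [hB3, h0, zero_smul, add_zero])
  refine ⟨(γ3*β2) • A x + (-(γ2*β3)) • A (x+a), ?_, ⟨_, _, rfl⟩, ?_, ?_⟩
  · -- T ≠ 0
    intro h0
    have := eq_smul_of_combo_zero h0 (mul_ne_zero hγ3 hβ2)
    exact h.npAA hxne _ this
  · -- T on the B-line
    refine ⟨γ3, -γ2, ?_⟩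
    rw [hB2, hB3]
    apply ext3 <;> (simp only [Pi.add_apply, Pi.smul_apply, smul_eq_mul]; ring)
  · intro g hg0 hga
    have hxg : x ≠ x + g := fun hh => hg0 (left_eq_add.mp hh)
    have hag : x + a ≠ x + g := fun hh => hga (add_left_cancel hh).symm
    -- A (x+g) = β1 • B (y+g) + γ1 • O
    have m1 : InSpan2 (B (y+g)) (C (x+y)) (A (x+g)) := by
      apply span_of_dt _ (h.npBC _ _) hO
      rw [dt_cyc]
      exact (h.iff' (x+g) (y+g) _).mpr (hshift x y g)
    obtain ⟨β1, γ1, hB1⟩ := m1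
    have hβ1 : β1 ≠ 0 := by
      intro h0; exact h.npAC (x+g) (x+y) γ1 (by rw [hB1, h0, zero_smul, zero_add])
    have hγ1 : γ1 ≠ 0 := by
      intro h0
      exact h.npAB (x+g) (y+g) β1 (by rw [hB1, h0, zero_smul, add_zero])
    -- the point P12 = C (x+y+g) up to scalar
    have hP12alt : (γ2*β1) • B (y+g) + (-(γ1*β2)) • A x
        = γ2 • A (x+g) + (-γ1) • B y := by
      rw [hB1, hB2]
      apply ext3 <;> (simp only [Pi.add_apply, Pi.smul_apply, smul_eq_mul]; ring)
    have hP12ne : (γ2*β1) • B (y+g) + (-(γ1*β2)) • A x ≠ 0 := by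
      intro h0
      have := eq_smul_of_combo_zero h0 (mul_ne_zero hγ2 hβ1)
      exact (h.npAB x (y+g)).flip (h.nzB _) _ this
    have mem1 : InSpan2 (B (y+g)) (A x) (C (x+y+g)) := by
      apply span_of_dt _ ((h.npAB x (y+g)).flip (h.nzB _)) (h.nzA x)
      rw [dt_swap12, neg_eq_zero]
      exact (h.iff' x (y+g) _).mpr (by abel)
    have mem2 : InSpan2 (A (x+g)) (B y) (C (x+y+g)) := by
      apply span_of_dt _ (h.npAB _ _) (h.nzB y)
      exact (h.iff' (x+g) y _).mpr (by abel)
    rcases prop_or_span (u := B (y+g)) (v := A x) (u' := A (x+g)) (v' := B y)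
        ⟨γ2*β1, -(γ1*β2), rfl⟩ ⟨γ2, -γ1, hP12alt⟩ mem1 mem2 hP12ne (h.nzC _) with
      ⟨k, hk0, hkC⟩ | ⟨hbad, _⟩
    swap
    · exfalso
      obtain ⟨p, q, hpq⟩ := hbad
      have hz : dt (A x) (A (x+g)) (B (y+g)) = 0 := by
        rw [hpq]; exact dt_span_pattern1 (B (y+g)) (A x) p q
      exact h.F3 (y+g) hxg hz
    -- the point P31 = C (x+y+g+a) up to scalar
    have hP31alt : (γ1*β3) • A (x+a) + (-(γ3*β1)) • B (y+g)
        = (-γ3) • A (x+g) + γ1 • B (y+a) := by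
      rw [hB1, hB3]
      apply ext3 <;> (simp only [Pi.add_apply, Pi.smul_apply, smul_eq_mul]; ring)
    have hP31ne : (γ1*β3) • A (x+a) + (-(γ3*β1)) • B (y+g) ≠ 0 := by
      intro h0
      have := eq_smul_of_combo_zero h0 (mul_ne_zero hγ1 hβ3)
      exact h.npAB (x+a) (y+g) _ this
    have mem1' : InSpan2 (A (x+a)) (B (y+g)) (C (x+y+g+a)) := by
      apply span_of_dt _ (h.npAB _ _) (h.nzB _)
      exact (h.iff' (x+a) (y+g) _).mpr (by abel)
    have mem2' : InSpan2 (A (x+g)) (B (y+a)) (C (x+y+g+a)) := by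
      apply span_of_dt _ (h.npAB _ _) (h.nzB _)
      exact (h.iff' (x+g) (y+a) _).mpr (by abel)
    rcases prop_or_span (u := A (x+a)) (v := B (y+g)) (u' := A (x+g)) (v' := B (y+a))
        ⟨γ1*β3, -(γ3*β1), rfl⟩ ⟨-γ3, γ1, hP31alt⟩ mem1' mem2' hP31ne (h.nzC _) with
      ⟨k', hk'0, hk'C⟩ | ⟨hbad, _⟩
    swap
    · exfalso
      obtain ⟨p, q, hpq⟩ := hbad
      have hz : dt (A (x+a)) (A (x+g)) (B (y+g)) = 0 := by
        rw [hpq]; exact dt_span_pattern2 (A (x+a)) (B (y+g)) p q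
      exact h.F3 (y+g) hag hz
    -- conclude
    have hTP : InSpan2 ((γ2*β1) • B (y+g) + (-(γ1*β2)) • A x)
        ((γ1*β3) • A (x+a) + (-(γ3*β1)) • B (y+g))
        ((γ3*β2) • A x + (-(γ2*β3)) • A (x+a)) := by
      refine ⟨-(γ3/γ1), -(γ2/γ1), ?_⟩
      apply ext3 <;>
        (simp only [Pi.add_apply, Pi.smul_apply, smul_eq_mul]; field_simp; ring)
    refine span2_trans hTP ⟨k⁻¹, 0, ?_⟩ ⟨0, k'⁻¹, ?_⟩
    · rw [hkC, smul_smul, inv_mul_cancel₀ hk0, one_smul, zero_smul, add_zero]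
    · rw [hk'C, smul_smul, inv_mul_cancel₀ hk'0, one_smul, zero_smul, zero_add]

lemma dt_span_pattern3 (s t : V3 K) (a b : K) : dt s t (a • s + b • t) = 0 := by
  simp only [dt_expand, Pi.add_apply, Pi.smul_apply, smul_eq_mul]; ring

/-- The Fano-type contradiction: if the three "L-lines" of two nonzero classes mod `⟨a⟩`
are distinct, we reach a contradiction in characteristic `≠ 2`. -/
lemma fano (h : Net A B C) (h2 : (2:K) ≠ 0) (a b d : GG)
    (ha : a ≠ 0) (hb0 : b ≠ 0) (hba : b ≠ a) (hd0 : d ≠ 0) (hda : d ≠ a)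
    (hbd0 : b + d ≠ 0) (hbda : b + d ≠ a)
    (hNE : ¬ (InSpan2 (C d) (C (d+a)) (C (b+d)) ∧ InSpan2 (C d) (C (d+a)) (C (b+d+a)))) :
    False := by
  have hself : ∀ u : GG, u + u = 0 := by decide
  have hself2 : ∀ u v : GG, u + (u + v) = v := by decide
  obtain ⟨T, hT0, hTA, hTB, hTC⟩ := h.desargues 0 0 a ha
  obtain ⟨T', hT'0, _, _, hT'C⟩ := h.desargues 0 b a ha
  rw [zero_add] at hTA hTB
  have hTd := hTC d hd0 hda
  have hTbd := hTC (b+d) hbd0 hbda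
  simp only [zero_add] at hTd hTbd
  have hT'0a := hT'C b hb0 hba
  simp only [zero_add] at hT'0a
  rw [hself b] at hT'0a
  rw [zero_add] at hT'0a
  have hT'bd := hT'C d hd0 hda
  simp only [zero_add] at hT'bd
  have hT'd := hT'C (b+d) hbd0 hbda
  simp only [zero_add] at hT'd
  rw [hself2 b d] at hT'd
  -- T and T' both lie on the two distinct lines C d ∨ C (d+a) and C (b+d) ∨ C (b+d+a)
  rcases prop_or_span hTd hTbd hT'd hT'bd hT0 hT'0 with ⟨c, hc0, hcT⟩ | hspan
  swap
  · exact hNE hspan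
  -- hence T lies on C 0 ∨ C a
  have hT3 : InSpan2 (C 0) (C a) T := by
    obtain ⟨j', l', hT'⟩ := hT'0a
    refine ⟨c⁻¹ * j', c⁻¹ * l', ?_⟩
    have : T = c⁻¹ • T' := by
      rw [hcT, smul_smul, inv_mul_cancel₀ hc0, one_smul]
    rw [this, hT']
    apply ext3 <;> (simp only [Pi.add_apply, Pi.smul_apply, smul_eq_mul]; ring)
  -- Fano configuration: coordinates w.r.t. the basis (A 0, B 0, A a)
  have hD : dt (A 0) (B 0) (A a) ≠ 0 := by
    rw [show dt (A 0) (B 0) (A a) = -dt (A 0) (A a) (B 0) from by rw [dt_swap23]]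
    exact neg_ne_zero.mpr (h.F3 0 (by simpa using ha.symm))
  obtain ⟨P, Q, R, hBa⟩ := cramer3 hD (B a)
  have hP : P ≠ 0 := by
    intro h0
    rw [h0, zero_smul, zero_add] at hBa
    exact (h.swap).F3 (x := 0) (x' := a) (y := a) (by simpa using ha.symm)
      (by rw [hBa]; exact dt_span_pattern2 (B 0) (A a) Q R)
  have hQ : Q ≠ 0 := by
    intro h0
    rw [h0, zero_smul, add_zero] at hBa
    exact h.F3 (x := 0) (x' := a) a (by simpa using ha.symm)
      (by rw [hBa]; exact dt_span_pattern3 (A 0) (A a) P R)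
  have hR : R ≠ 0 := by
    intro h0
    rw [h0, zero_smul, add_zero] at hBa
    exact (h.swap).F3 (x := 0) (x' := a) (y := 0) (by simpa using ha.symm)
      (by rw [hBa]; exact dt_span_pattern1 (A 0) (B 0) P Q)
  -- C 0 in two ways
  have hC0 : InSpan2 (A 0) (B 0) (C 0) :=
    span_of_dt ((h.iff' 0 0 0).mpr (by rw [add_zero])) (h.npAB 0 0) (h.nzB 0)
  obtain ⟨u', v', hC0e⟩ := hC0
  have hC0' : InSpan2 (A a) (B a) (C 0) :=
    span_of_dt ((h.iff' a a 0).mpr (hself a)) (h.npAB a a) (h.nzB a)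
  obtain ⟨m, n, hC0e'⟩ := hC0'
  have hn : n ≠ 0 := by
    intro h0
    rw [h0, zero_smul, add_zero] at hC0e'
    exact (h.npAC a 0).flip (h.nzC 0) m hC0e'
  have exp1 : C 0 = u' • A 0 + v' • B 0 + (0:K) • A a := by
    rw [hC0e]; apply ext3 <;> (simp only [Pi.add_apply, Pi.smul_apply, smul_eq_mul]; ring)
  have exp2 : C 0 = (n*P) • A 0 + (n*Q) • B 0 + (m + n*R) • A a := by
    rw [hC0e', hBa]
    apply ext3 <;> (simp only [Pi.add_apply, Pi.smul_apply, smul_eq_mul]; ring)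
  obtain ⟨hu', hv', hmnR⟩ := coeff_unique hD (exp1.symm.trans exp2)
  -- C a in two ways
  have hCa1 : InSpan2 (A 0) (B a) (C a) :=
    span_of_dt ((h.iff' 0 a a).mpr (by rw [zero_add])) (h.npAB 0 a) (h.nzB a)
  obtain ⟨p, q, hCa1e⟩ := hCa1
  have hq : q ≠ 0 := by
    intro h0
    rw [h0, zero_smul, add_zero] at hCa1e
    exact (h.npAC 0 a).flip (h.nzC a) p hCa1e
  have hCa2 : InSpan2 (A a) (B 0) (C a) :=
    span_of_dt ((h.iff' a 0 a).mpr (by rw [add_zero])) (h.npAB a 0) (h.nzB 0)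
  obtain ⟨p', q', hCa2e⟩ := hCa2
  have exp3 : C a = (p + q*P) • A 0 + (q*Q) • B 0 + (q*R) • A a := by
    rw [hCa1e, hBa]
    apply ext3 <;> (simp only [Pi.add_apply, Pi.smul_apply, smul_eq_mul]; ring)
  have exp4 : C a = (0:K) • A 0 + q' • B 0 + p' • A a := by
    rw [hCa2e]; apply ext3 <;> (simp only [Pi.add_apply, Pi.smul_apply, smul_eq_mul]; ring)
  obtain ⟨hpqP, _, _⟩ := coeff_unique hD (exp3.symm.trans exp4)
  -- T in three ways
  obtain ⟨e, f, hT1⟩ := hTA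
  obtain ⟨h', i, hT2⟩ := hTB
  have exp5 : T = e • A 0 + (0:K) • B 0 + f • A a := by
    rw [hT1]; apply ext3 <;> (simp only [Pi.add_apply, Pi.smul_apply, smul_eq_mul]; ring)
  have exp6 : T = (i*P) • A 0 + (h' + i*Q) • B 0 + (i*R) • A a := by
    rw [hT2, hBa]
    apply ext3 <;> (simp only [Pi.add_apply, Pi.smul_apply, smul_eq_mul]; ring)
  obtain ⟨he, hhiQ, hf⟩ := coeff_unique hD (exp5.symm.trans exp6)
  have hi : i ≠ 0 := by
    intro h0
    rw [h0, zero_smul, add_zero] at hT2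
    have hh' : h' ≠ 0 := by
      intro hh0; rw [hh0, zero_smul] at hT2; exact hT0 hT2
    have hz : dt (A 0) (A a) (h' • B 0) = 0 := by
      rw [← hT2, hT1]
      exact dt_span_pattern3 (A 0) (A a) e f
    rw [dt_smul3] at hz
    exact h.F3 (x := 0) (x' := a) 0 (by simpa using ha.symm)
      ((mul_eq_zero.mp hz).resolve_left hh')
  obtain ⟨j, l, hT3e⟩ := hT3
  have exp7 : T = (j*u' + l*(p + q*P)) • A 0 + (j*v' + l*(q*Q)) • B 0 + (l*(q*R)) • A a := by
    rw [hT3e, hC0e, hCa1e, hBa]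
    apply ext3 <;> (simp only [Pi.add_apply, Pi.smul_apply, smul_eq_mul]; ring)
  obtain ⟨heq1, heq2, heq3⟩ := coeff_unique hD (exp5.symm.trans exp7)
  -- now pure scalar algebra: 2 * (i*Q) = 0
  -- heq1 : e = j*u' + l*(p+q*P), he : e = i*P, hu' : u' = n*P, hpqP : p + q*P = 0
  -- heq2 : 0 = j*v' + l*(q*Q), hv' : v' = n*Q
  -- heq3 : f = l*(q*R), hf : f = i*R
  rw [hu', hpqP, mul_zero, add_zero] at heq1
  rw [hv'] at heq2
  have hi_jn : i = j*n := by
    have h1 : i*P = (j*n)*P := by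
      rw [← he, heq1]; ring
    exact mul_right_cancel₀ hP h1
  have hi_lq : i = l*q := by
    have h1 : i*R = (l*q)*R := by
      rw [← hf, heq3]; ring
    exact mul_right_cancel₀ hR h1
  have hfinal : (2:K)*(i*Q) = 0 := by
    linear_combination Q*hi_jn + Q*hi_lq - heq2
  exact mul_ne_zero h2 (mul_ne_zero hi hQ) hfinal

lemma dt_coord (e1 e2 X : V3 K) (σ c τ d μ ν ρ : K) :
    dt (σ • e1 + c • X) (τ • e2 + d • X) (μ • e1 + ν • e2 + ρ • X)
      = (σ*τ*ρ - σ*d*ν - c*τ*μ) * dt e1 e2 X := by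
  simp only [dt_expand, Pi.add_apply, Pi.smul_apply, smul_eq_mul]; ring

/-- Stage 3: if both the `A`-component and the `B`-component are contained in lines,
we get a contradiction. -/
lemma stage3 (h : Net A B C) (h2 : (2:K) ≠ 0)
    (hA : ∀ z : GG, z ≠ 0 → InSpan2 (A (0,0,1)) (A (1,0,1)) (A z))
    (hB : ∀ z : GG, z ≠ 0 → InSpan2 (B (0,0,1)) (B (1,0,1)) (B z)) : False := by
  have hcan : ∀ u v : GG, (u + v) + v = u := by decide
  have hcan2 : ∀ u v : GG, u + (u + v) = v := by decide
  have hzz : ((0,0,1) : GG) ≠ (1,0,1) := by decide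
  have hD1 : dt (A (0,0,1)) (A (1,0,1)) (B (0,0,1)) ≠ 0 := h.F3 _ hzz
  obtain ⟨α, β, γ, hb2⟩ := cramer3 hD1 (B (1,0,1))
  set x0 : V3 K := α • A (0,0,1) + β • A (1,0,1) with hx0def
  have hb2' : B (1,0,1) = x0 + γ • B (0,0,1) := by rw [hb2, hx0def]
  have hx0B : x0 = (-γ) • B (0,0,1) + (1:K) • B (1,0,1) := by
    rw [hb2']; apply ext3 <;>
      (simp only [Pi.add_apply, Pi.smul_apply, smul_eq_mul]; ring)
  have hx0 : x0 ≠ 0 := by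
    intro h0
    rw [h0, zero_add] at hb2'
    exact h.npBB (show ((1,0,1):GG) ≠ (0,0,1) by decide) γ hb2'
  -- A-side generator selection
  have hselA : ∃ wA : GG, wA ≠ 0 ∧ wA ≠ (0,1,0) ∧
      InSpan2 (A (0,0,1)) (A (1,0,1)) (A wA) ∧
      ∀ z, z ≠ 0 → InSpan2 (A wA) x0 (A z) := by
    by_cases hp : ∃ c : K, A (0,0,1) = c • x0
    · obtain ⟨c, hc⟩ := hp
      refine ⟨(1,0,1), by decide, by decide, ⟨0, 1, by
        apply ext3 <;> (simp only [Pi.add_apply, Pi.smul_apply, smul_eq_mul]; ring)⟩, ?_⟩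
      intro z hz
      refine span2_trans (hA z hz) ⟨0, c, ?_⟩ ⟨1, 0, ?_⟩
      · rw [hc]; apply ext3 <;>
          (simp only [Pi.add_apply, Pi.smul_apply, smul_eq_mul]; ring)
      · apply ext3 <;> (simp only [Pi.add_apply, Pi.smul_apply, smul_eq_mul]; ring)
    · have hβ : β ≠ 0 := by
        intro h0
        rw [h0, zero_smul, add_zero] at hx0def
        have hα : α ≠ 0 := by
          intro ha0; rw [ha0, zero_smul] at hx0def; exact hx0 hx0def
        exact hp ⟨α⁻¹, by rw [hx0def, smul_smul, inv_mul_cancel₀ hα, one_smul]⟩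
      refine ⟨(0,0,1), by decide, by decide, ⟨1, 0, by
        apply ext3 <;> (simp only [Pi.add_apply, Pi.smul_apply, smul_eq_mul]; ring)⟩, ?_⟩
      intro z hz
      refine span2_trans (hA z hz) ⟨1, 0, ?_⟩ ⟨-α/β, 1/β, ?_⟩
      · apply ext3 <;> (simp only [Pi.add_apply, Pi.smul_apply, smul_eq_mul]; ring)
      · rw [hx0def]; apply ext3 <;>
          (simp only [Pi.add_apply, Pi.smul_apply, smul_eq_mul]; field_simp; ring)
  obtain ⟨wA, hwA0, hwAne, hwAspan, hgenA⟩ := hselA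
  -- B-side generator: the label (0,0,1) always works
  have hgenB : ∀ z, z ≠ 0 → InSpan2 (B (0,0,1)) x0 (B z) := by
    intro z hz
    refine span2_trans (hB z hz) ⟨1, 0, ?_⟩ ⟨γ, 1, ?_⟩
    · apply ext3 <;> (simp only [Pi.add_apply, Pi.smul_apply, smul_eq_mul]; ring)
    · rw [hb2']; apply ext3 <;>
        (simp only [Pi.add_apply, Pi.smul_apply, smul_eq_mul]; ring)
  -- (A wA, B (0,0,1), x0) is a basis
  have hDb : dt (A wA) (B (0,0,1)) x0 ≠ 0 := by
    intro h0
    obtain ⟨p, q, hx0e⟩ := span_of_dt h0 (h.npAB _ _) (h.nzB _)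
    obtain ⟨r, sσ, hAe⟩ := hgenA (0,1,0) (by decide)
    have hz : dt (A wA) (A (0,1,0)) (B (0,0,1)) = 0 := by
      rw [hAe, hx0e]
      simp only [dt_expand, Pi.add_apply, Pi.smul_apply, smul_eq_mul]; ring
    exact h.F3 _ hwAne hz
  -- coordinates
  have hchoA : ∀ z : GG, ∃ σ c : K, z = 0 ∨ (σ ≠ 0 ∧ A z = σ • A wA + c • x0) := by
    intro z
    by_cases hz : z = 0
    · exact ⟨1, 0, Or.inl hz⟩
    obtain ⟨σ, c, he⟩ := hgenA z hz
    refine ⟨σ, c, Or.inr ⟨?_, he⟩⟩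
    intro h0
    rw [h0, zero_smul, zero_add] at he
    have hz2 : dt (B (0,0,1)) (B (1,0,1)) (A z) = 0 := by
      rw [he, hx0B]
      simp only [dt_expand, Pi.add_apply, Pi.smul_apply, smul_eq_mul]; ring
    exact (h.swap).F3 (x := (0,0,1)) (x' := (1,0,1)) z hzz hz2
  choose σA cA hcoA using hchoA
  have hchoB : ∀ z : GG, ∃ σ c : K, z = 0 ∨ (σ ≠ 0 ∧ B z = σ • B (0,0,1) + c • x0) := by
    intro z
    by_cases hz : z = 0
    · exact ⟨1, 0, Or.inl hz⟩
    obtain ⟨σ, c, he⟩ := hgenB z hz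
    refine ⟨σ, c, Or.inr ⟨?_, he⟩⟩
    intro h0
    rw [h0, zero_smul, zero_add] at he
    have hz2 : dt (A (0,0,1)) (A (1,0,1)) (B z) = 0 := by
      rw [he, hx0def]
      simp only [dt_expand, Pi.add_apply, Pi.smul_apply, smul_eq_mul]; ring
    exact h.F3 z hzz hz2
  choose σB cB hcoB using hchoB
  -- injectivity of the B-coordinate
  have tinj : ∀ y y', y ≠ 0 → y' ≠ 0 → cB y / σB y = cB y' / σB y' → y = y' := by
    intro y y' hy hy' heq
    by_contra hne
    obtain ⟨hσy, hBy⟩ := (hcoB y).resolve_left hy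
    obtain ⟨hσy', hBy'⟩ := (hcoB y').resolve_left hy'
    rw [div_eq_div_iff hσy hσy'] at heq
    have hcross : σB y' • B y = σB y • B y' := by
      rw [hBy, hBy']
      apply ext3 <;>
        (simp only [Pi.add_apply, Pi.smul_apply, smul_eq_mul]; linear_combination
          (x0 _) * heq)
    have : B y = ((σB y')⁻¹ * σB y) • B y' := by
      rw [← smul_smul, ← hcross, smul_smul, inv_mul_cancel₀ hσy', one_smul]
    exact h.npBB hne _ this
  -- the fundamental relations
  have hrel : ∀ z : GG, ∃ μ ν ρ : K, z = 0 ∨ (μ ≠ 0 ∧ ν ≠ 0 ∧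
      ∀ x, x ≠ 0 → x ≠ z →
        μ * (cA x / σA x) + ν * (cB (x+z) / σB (x+z)) = ρ) := by
    intro z
    by_cases hz : z = 0
    · exact ⟨1, 1, 1, Or.inl hz⟩
    obtain ⟨μ, ν, ρ, hCz⟩ := cramer3 hDb (C z)
    have hμ : μ ≠ 0 := by
      intro h0
      rw [h0, zero_smul, zero_add] at hCz
      have hz2 : dt (B (0,0,1)) (B (1,0,1)) (C z) = 0 := by
        rw [hCz, hx0B]
        simp only [dt_expand, Pi.add_apply, Pi.smul_apply, smul_eq_mul]; ring
      exact (h.cyc).F3 (x := (0,0,1)) (x' := (1,0,1)) z hzz hz2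
    have hν : ν ≠ 0 := by
      intro h0
      rw [h0, zero_smul, add_zero] at hCz
      have hsp : InSpan2 (A (0,0,1)) (A (1,0,1)) (C z) := by
        refine span2_trans (s := A (0,0,1)) (t := A (1,0,1)) ⟨μ, ρ, hCz⟩ hwAspan
          ⟨α, β, hx0def⟩
      obtain ⟨p, q, hCe⟩ := hsp
      have hz2 : dt (A (0,0,1)) (A (1,0,1)) (C z) = 0 := by
        rw [hCe]
        simp only [dt_expand, Pi.add_apply, Pi.smul_apply, smul_eq_mul]; ring
      exact (h.cyc.cyc.swap).F3 (x := (0,0,1)) (x' := (1,0,1)) z hzz hz2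
    refine ⟨μ, ν, ρ, Or.inr ⟨hμ, hν, ?_⟩⟩
    intro x hx hxz
    have hxz0 : x + z ≠ 0 := by
      intro h0
      exact hxz (by rw [← hcan x z, h0, zero_add])
    obtain ⟨hσx, hAx⟩ := (hcoA x).resolve_left hx
    obtain ⟨hσxz, hBxz⟩ := (hcoB (x+z)).resolve_left hxz0
    have hdet : dt (A x) (B (x+z)) (C z) = 0 :=
      (h.iff' x (x+z) z).mpr (hcan2 x z)
    rw [hAx, hBxz, hCz, dt_coord] at hdet
    have hkey : σA x * σB (x+z) * ρ - σA x * cB (x+z) * ν - cA x * σB (x+z) * μ = 0 :=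
      (mul_eq_zero.mp hdet).resolve_right hDb
    field_simp
    linear_combination -hkey
  choose μf νf ρf hrelf using hrel
  -- three instances of the "m-relation"
  have inst : ∀ z1 z2 y : GG, z1 ≠ 0 → z2 ≠ 0 →
      y ≠ 0 → y + z1 ≠ 0 → y + z1 ≠ z1 → y + z1 ≠ z2 →
      y + z1 + z2 ≠ 0 → y + z1 + z2 + z1 ≠ 0 → y + z1 + z2 + z1 ≠ z1 →
      y + z1 + z2 + z1 ≠ z2 → y ≠ y + z1 + z2 →
      (y + z1) + z1 = y → (y + z1 + z2 + z1) + z2 = y →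
      (y + z1 + z2 + z1) + z1 = y + z1 + z2 → (y + z1) + z2 = y + z1 + z2 →
      μf z2 * νf z1 + μf z1 * νf z2 = 0 := by
    intro z1 z2 y hz1 hz2 hy hx1 hx1z1 hx1z2 hY hx2 hx2z1 hx2z2 hyY e1 e2 e3 e4
    obtain ⟨hμ1, hν1, hr1⟩ := (hrelf z1).resolve_left hz1
    obtain ⟨hμ2, hν2, hr2⟩ := (hrelf z2).resolve_left hz2
    have ea1 := hr1 (y + z1) hx1 hx1z1
    rw [e1] at ea1
    have eb1 := hr2 (y + z1) hx1 hx1z2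
    rw [e4] at eb1
    have ea2 := hr1 (y + z1 + z2 + z1) hx2 hx2z1
    rw [e3] at ea2
    have eb2 := hr2 (y + z1 + z2 + z1) hx2 hx2z2
    rw [e2] at eb2
    have hfac : (μf z2 * νf z1 + μf z1 * νf z2) *
        ((cB y / σB y) - (cB (y+z1+z2) / σB (y+z1+z2))) = 0 := by
      linear_combination μf z2 * ea1 - μf z1 * eb1 - μf z2 * ea2 + μf z1 * eb2
    rcases mul_eq_zero.mp hfac with hgood | hbad
    · exact hgood
    · exact absurd (tinj y (y+z1+z2) hy hY (sub_eq_zero.mp hbad)) hyY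
  have r12 := inst (1,0,0) (0,1,0) (0,0,1) (by decide) (by decide) (by decide)
    (by decide) (by decide) (by decide) (by decide) (by decide) (by decide)
    (by decide) (by decide) (by decide) (by decide) (by decide) (by decide)
  have r23 := inst (0,1,0) (0,0,1) (1,0,0) (by decide) (by decide) (by decide)
    (by decide) (by decide) (by decide) (by decide) (by decide) (by decide)
    (by decide) (by decide) (by decide) (by decide) (by decide) (by decide)
  have r13 := inst (1,0,0) (0,0,1) (0,1,0) (by decide) (by decide) (by decide)
    (by decide) (by decide) (by decide) (by decide) (by decide) (by decide)
    (by decide) (by decide) (by decide) (by decide) (by decide) (by decide)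
  obtain ⟨hμ1, hν1, -⟩ := (hrelf (1,0,0)).resolve_left (by decide)
  obtain ⟨hμ2, hν2, -⟩ := (hrelf (0,1,0)).resolve_left (by decide)
  obtain ⟨hμ3, hν3, -⟩ := (hrelf (0,0,1)).resolve_left (by decide)
  have hfinal : (2:K) * (μf (1,0,0) * (μf (0,0,1) * νf (0,1,0))) = 0 := by
    linear_combination μf (0,0,1) * r12 - μf (0,1,0) * r13 + μf (1,0,0) * r23
  exact mul_ne_zero h2 (mul_ne_zero hμ1 (mul_ne_zero hμ3 hν2)) hfinal

/-- Stage 1: either a Fano contradiction, or the whole third component is on a line. -/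
lemma allCollC (h : Net A B C) (h2 : (2:K) ≠ 0) :
    ∀ z : GG, z ≠ 0 → InSpan2 (C (0,0,1)) (C (1,0,1)) (C z) := by
  have triv1 : ∀ u v : V3 K, InSpan2 u v u := fun u v => ⟨1, 0, by
    apply ext3 <;> (simp only [Pi.add_apply, Pi.smul_apply, smul_eq_mul]; ring)⟩
  have triv2 : ∀ u v : V3 K, InSpan2 u v v := fun u v => ⟨0, 1, by
    apply ext3 <;> (simp only [Pi.add_apply, Pi.smul_apply, smul_eq_mul]; ring)⟩
  by_cases h12 : InSpan2 (C (0,1,0)) (C (1,1,0)) (C (0,0,1)) ∧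
      InSpan2 (C (0,1,0)) (C (1,1,0)) (C (1,0,1))
  swap
  · refine (h.fano h2 (1,0,0) (0,1,1) (0,1,0) (by decide) (by decide) (by decide)
      (by decide) (by decide) (by decide) (by decide) ?_).elim
    rintro ⟨p1, p2⟩
    apply h12
    rw [show ((0,1,0):GG)+(1,0,0) = (1,1,0) from by decide,
        show ((0,1,1):GG)+(0,1,0) = (0,0,1) from by decide] at p1 p2
    rw [show ((0,0,1):GG)+(1,0,0) = (1,0,1) from by decide] at p2
    exact ⟨p1, p2⟩
  by_cases h13 : InSpan2 (C (0,1,0)) (C (1,1,0)) (C (0,1,1)) ∧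
      InSpan2 (C (0,1,0)) (C (1,1,0)) (C (1,1,1))
  swap
  · refine (h.fano h2 (1,0,0) (0,0,1) (0,1,0) (by decide) (by decide) (by decide)
      (by decide) (by decide) (by decide) (by decide) ?_).elim
    rintro ⟨p1, p2⟩
    apply h13
    rw [show ((0,1,0):GG)+(1,0,0) = (1,1,0) from by decide,
        show ((0,0,1):GG)+(0,1,0) = (0,1,1) from by decide] at p1 p2
    rw [show ((0,1,1):GG)+(1,0,0) = (1,1,1) from by decide] at p2
    exact ⟨p1, p2⟩
  by_cases h12' : InSpan2 (C (1,0,0)) (C (1,1,0)) (C (0,0,1)) ∧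
      InSpan2 (C (1,0,0)) (C (1,1,0)) (C (0,1,1))
  swap
  · refine (h.fano h2 (0,1,0) (1,0,1) (1,0,0) (by decide) (by decide) (by decide)
      (by decide) (by decide) (by decide) (by decide) ?_).elim
    rintro ⟨p1, p2⟩
    apply h12'
    rw [show ((1,0,0):GG)+(0,1,0) = (1,1,0) from by decide,
        show ((1,0,1):GG)+(1,0,0) = (0,0,1) from by decide] at p1 p2
    rw [show ((0,0,1):GG)+(0,1,0) = (0,1,1) from by decide] at p2
    exact ⟨p1, p2⟩
  by_cases h13' : InSpan2 (C (1,0,0)) (C (1,1,0)) (C (1,0,1)) ∧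
      InSpan2 (C (1,0,0)) (C (1,1,0)) (C (1,1,1))
  swap
  · refine (h.fano h2 (0,1,0) (0,0,1) (1,0,0) (by decide) (by decide) (by decide)
      (by decide) (by decide) (by decide) (by decide) ?_).elim
    rintro ⟨p1, p2⟩
    apply h13'
    rw [show ((1,0,0):GG)+(0,1,0) = (1,1,0) from by decide,
        show ((0,0,1):GG)+(1,0,0) = (1,0,1) from by decide] at p1 p2
    rw [show ((1,0,1):GG)+(0,1,0) = (1,1,1) from by decide] at p2
    exact ⟨p1, p2⟩
  -- now merge
  have hnpC : Nonprop (C (0,0,1)) (C (1,0,1)) :=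
    h.npCC (show ((0,0,1):GG) ≠ (1,0,1) from by decide)
  have inv1 := span2_invert h12.1 h12.2 (h.nzC _) hnpC
  have inv2 := span2_invert h12'.1 h13'.1 (h.nzC _) hnpC
  intro z hz
  have hcases : ∀ w : GG, w ≠ 0 → (w = (0,0,1) ∨ w = (1,0,1) ∨ w = (0,1,0) ∨
      w = (1,1,0) ∨ w = (1,0,0) ∨ w = (0,1,1) ∨ w = (1,1,1)) := by decide
  rcases hcases z hz with rfl | rfl | rfl | rfl | rfl | rfl | rfl
  · exact triv1 _ _
  · exact triv2 _ _
  · exact inv1.1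
  · exact inv1.2
  · exact inv2.1
  · exact span2_trans h13.1 inv1.1 inv1.2
  · exact span2_trans h13.2 inv1.1 inv1.2

/-- The master theorem: there is no dual 3-net labeled by `(ℤ/2)³` in char `≠ 2`. -/
lemma master (h : Net A B C) (h2 : (2:K) ≠ 0) : False := by
  have hAcoll := (h.cyc).allCollC h2
  have hBcoll := (h.cyc.cyc).allCollC h2
  exact h.stage3 h2 hAcoll hBcoll

end Net
end NetDef

end DualNet
end

noncomputable section

/-- The projective plane over `K`, as the projectivization of `K³`. -/
abbrev PP (K : Type*) [Field K] := Projectivization K (Fin 3 → K)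

/-- Three points of `PG(2,K)` are collinear iff the determinant of the matrix of
representatives vanishes. -/
def Col {K : Type*} [Field K] (p q r : PP K) : Prop :=
  Matrix.det (Matrix.of ![p.rep, q.rep, r.rep]) = 0

/-- Over an algebraically closed field of characteristic `≠ 2`, there is no dual 3-net in
`PG(2,K)` labeled by the elementary abelian group `(ℤ/2ℤ)³`. -/
theorem no_dual_3net_elementary_abelian_eight {K : Type*} [Field K] [IsAlgClosed K]
    (hchar : ringChar K ≠ 2) :
    ¬ ∃ α₁ α₂ α₃ : (ZMod 2 × ZMod 2 × ZMod 2) → PP K,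
        Function.Injective α₁ ∧ Function.Injective α₂ ∧ Function.Injective α₃ ∧
        Disjoint (Set.range α₁) (Set.range α₂) ∧
        Disjoint (Set.range α₁) (Set.range α₃) ∧
        Disjoint (Set.range α₂) (Set.range α₃) ∧
        ∀ x y z : ZMod 2 × ZMod 2 × ZMod 2,
          Col (α₁ x) (α₂ y) (α₃ z) ↔ x + y = z := by
  rintro ⟨α₁, α₂, α₃, -, -, -, -, -, -, hcol⟩
  have h2K : (2:K) ≠ 0 := Ring.two_ne_zero hchar
  exact DualNet.Net.master (K := K) (A := fun x => (α₁ x).rep)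
    (B := fun x => (α₂ x).rep) (C := fun x => (α₃ x).rep)
    ⟨fun x => Projectivization.rep_nonzero _, fun x => Projectivization.rep_nonzero _,
      fun x => Projectivization.rep_nonzero _, fun x y z => hcol x y z⟩ h2K

end
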